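/- Let g_x, g_z be nonzero reals with |g_x| ≠ |g_z| and let H_pen = g_x X₁X₂ + g_z Z₁Z₂ + g_x X₃X₄ + g_z Z₃Z₄ act on four qubits. Then the zero-eigenvalue eigenspace of H_pen is exactly 4-dimensional and is spanned by the states |φ_{s,t}⟩₁₂ ⊗ |φ_{−s,−t}⟩₃₄ for s,t ∈ {−1,1}. -/

import Mathlib

open Matrix Kronecker

noncomputable section

def PauliX : Matrix (Fin 2) (Fin 2) ℂ := !![0, 1; 1, 0]
def PauliY : Matrix (Fin 2) (Fin 2) ℂ := !![0, -Complex.I; Complex.I, 0]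
def PauliZ : Matrix (Fin 2) (Fin 2) ℂ := !![1, 0; 0, -1]

/-- The Bell state `|φ_{s,t}⟩` for `s, t ∈ {-1, 1}`, the simultaneous eigenvector of
`Z⊗Z` and `X⊗X` with eigenvalues `s` and `t` respectively. -/
def bell (s t : ℤ) : Fin 2 × Fin 2 → ℂ := fun p =>
  (Real.sqrt 2 : ℂ)⁻¹ *
    (if p.2 = (if s = 1 then p.1 else p.1 + 1) then (if p.1 = 0 then 1 else (t : ℂ)) else 0)

/-- The single-qubit operator `A` acting on qubit `i` of a register of qubits
indexed by `ι` (identity on all other qubits). -/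
def pauliAt {ι : Type*} [Fintype ι] [DecidableEq ι] (A : Matrix (Fin 2) (Fin 2) ℂ)
    (i : ι) : Matrix (ι → Fin 2) (ι → Fin 2) ℂ :=
  fun f g => A (f i) (g i) * ∏ j ∈ Finset.univ.erase i, (if f j = g j then 1 else 0)

/-- The 4-qubit penalty Hamiltonian
`H_pen = g_x X₁X₂ + g_z Z₁Z₂ + g_x X₃X₄ + g_z Z₃Z₄`. -/
def Hpen4 (gx gz : ℝ) : Matrix (Fin 4 → Fin 2) (Fin 4 → Fin 2) ℂ :=
  (gx : ℂ) • (pauliAt PauliX 0 * pauliAt PauliX 1) +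
  (gz : ℂ) • (pauliAt PauliZ 0 * pauliAt PauliZ 1) +
  (gx : ℂ) • (pauliAt PauliX 2 * pauliAt PauliX 3) +
  (gz : ℂ) • (pauliAt PauliZ 2 * pauliAt PauliZ 3)

/-- The codeword `|φ_{s,t}⟩₁₂ ⊗ |φ_{−s,−t}⟩₃₄` of the [[4,2,2]] Hamiltonian code. -/
def cw (s t : ℤ) : (Fin 4 → Fin 2) → ℂ := fun f =>
  bell s t (f 0, f 1) * bell (-s) (-t) (f 2, f 3)

/-- The set of the four codewords of the [[4,2,2]] Hamiltonian code. -/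
def codewords : Set ((Fin 4 → Fin 2) → ℂ) :=
  {v | ∃ s t : ℤ, (s = 1 ∨ s = -1) ∧ (t = 1 ∨ t = -1) ∧ v = cw s t}

namespace HPaux

lemma c2_sq : ((Real.sqrt 2 : ℂ))⁻¹ * ((Real.sqrt 2 : ℂ))⁻¹ = 1/2 := by
  rw [← mul_inv]
  norm_cast
  rw [Real.mul_self_sqrt (by norm_num)]
  norm_num

def sgn : Fin 2 → ℤ := fun i => if i = 0 then 1 else -1

abbrev I4 := (Fin 2 × Fin 2) × (Fin 2 × Fin 2)

def ev (i : I4) : (Fin 4 → Fin 2) → ℂ := fun f =>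
  bell (sgn i.1.1) (sgn i.1.2) (f 0, f 1) * bell (sgn i.2.1) (sgn i.2.2) (f 2, f 3)

def W : Matrix I4 (Fin 4 → Fin 2) ℂ := fun i f => ev i f

def Dr (gx gz : ℝ) (i : I4) : ℝ :=
  gz * ((sgn i.1.1 : ℝ) + (sgn i.2.1 : ℝ)) + gx * ((sgn i.1.2 : ℝ) + (sgn i.2.2 : ℝ))

def e4 : (Fin 4 → Fin 2) ≃ I4 where
  toFun f := ((f 0, f 1), (f 2, f 3))
  invFun p := ![p.1.1, p.1.2, p.2.1, p.2.2]
  left_inv f := by funext i; fin_cases i <;> rfl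
  right_inv p := rfl

lemma sum_pi4 (F : (Fin 4 → Fin 2) → ℂ) :
    ∑ f, F f = ∑ a, ∑ b, ∑ c, ∑ d, F ![a, b, c, d] := by
  rw [← Equiv.sum_comp e4.symm F, Fintype.sum_prod_type]
  simp only [Fintype.sum_prod_type]
  rfl

lemma sum_pi4' (F : (Fin 4 → Fin 2) → ℂ) :
    ∑ f, F f = ∑ q : Fin 2 × Fin 2, ∑ r : Fin 2 × Fin 2, F ![q.1, q.2, r.1, r.2] := by
  rw [← Equiv.sum_comp e4.symm F, Fintype.sum_prod_type]
  rfl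

lemma bell_ortho (a b a' b' : Fin 2) :
    ∑ p : Fin 2 × Fin 2, bell (sgn a) (sgn b) p * bell (sgn a') (sgn b') p =
      if a = a' ∧ b = b' then 1 else 0 := by
  have h2 := c2_sq
  fin_cases a <;> fin_cases b <;> fin_cases a' <;> fin_cases b' <;>
    simp_all [Fintype.sum_prod_type, Fin.sum_univ_two, bell, sgn]

lemma eig2 (gx gz : ℝ) (a b : Fin 2) (p : Fin 2 × Fin 2) :
    ∑ q : Fin 2 × Fin 2,
      ((gx : ℂ) * (PauliX p.1 q.1 * PauliX p.2 q.2) +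
       (gz : ℂ) * (PauliZ p.1 q.1 * PauliZ p.2 q.2)) * bell (sgn a) (sgn b) q =
    ((gz : ℂ) * (sgn a : ℤ) + (gx : ℂ) * (sgn b : ℤ)) * bell (sgn a) (sgn b) p := by
  obtain ⟨p1, p2⟩ := p
  fin_cases a <;> fin_cases b <;> fin_cases p1 <;> fin_cases p2 <;>
    simp [Fintype.sum_prod_type, Fin.sum_univ_two, bell, sgn, PauliX, PauliZ] <;> ring

lemma erase0 : (Finset.univ.erase (0 : Fin 4)) = {1, 2, 3} := by decide
lemma erase1 : (Finset.univ.erase (1 : Fin 4)) = {0, 2, 3} := by decide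
lemma erase2 : (Finset.univ.erase (2 : Fin 4)) = {0, 1, 3} := by decide
lemma erase3 : (Finset.univ.erase (3 : Fin 4)) = {0, 1, 2} := by decide

set_option maxHeartbeats 2000000 in
lemma pauli_mul_01 (A B : Matrix (Fin 2) (Fin 2) ℂ) (f g : Fin 4 → Fin 2) :
    (pauliAt A (0 : Fin 4) * pauliAt B (1 : Fin 4)) f g =
      A (f 0) (g 0) * B (f 1) (g 1) *
        ((if f 2 = g 2 then (1:ℂ) else 0) * (if f 3 = g 3 then (1:ℂ) else 0)) := by
  rw [mul_apply, sum_pi4]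
  simp only [pauliAt, erase0, erase1]
  simp [Finset.prod_insert, Fin.sum_univ_two]
  have h2 : ∀ x : Fin 2, x = 0 ∨ x = 1 := by decide
  rcases h2 (f 1) with h1 | h1 <;>
    rcases h2 (f 2) with h3 | h3 <;> rcases h2 (f 3) with h4 | h4 <;>
    rcases h2 (g 0) with h5 | h5 <;>
    rcases h2 (g 2) with h7 | h7 <;> rcases h2 (g 3) with h8 | h8 <;>
    simp [h1, h3, h4, h5, h7, h8]

set_option maxHeartbeats 2000000 in
lemma pauli_mul_23 (A B : Matrix (Fin 2) (Fin 2) ℂ) (f g : Fin 4 → Fin 2) :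
    (pauliAt A (2 : Fin 4) * pauliAt B (3 : Fin 4)) f g =
      ((if f 0 = g 0 then (1:ℂ) else 0) * (if f 1 = g 1 then (1:ℂ) else 0)) *
        (A (f 2) (g 2) * B (f 3) (g 3)) := by
  rw [mul_apply, sum_pi4]
  simp only [pauliAt, erase2, erase3]
  simp [Finset.prod_insert, Fin.sum_univ_two]
  have h2 : ∀ x : Fin 2, x = 0 ∨ x = 1 := by decide
  rcases h2 (f 0) with h0 | h0 <;> rcases h2 (f 1) with h1 | h1 <;>
    rcases h2 (f 3) with h4 | h4 <;>
    rcases h2 (g 0) with h5 | h5 <;> rcases h2 (g 1) with h6 | h6 <;>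
    rcases h2 (g 2) with h7 | h7 <;>
    simp [h0, h1, h4, h5, h6, h7]

lemma Hpen4_apply (gx gz : ℝ) (f g : Fin 4 → Fin 2) :
    Hpen4 gx gz f g =
      ((gx : ℂ) * (PauliX (f 0) (g 0) * PauliX (f 1) (g 1)) +
       (gz : ℂ) * (PauliZ (f 0) (g 0) * PauliZ (f 1) (g 1))) *
        ((if f 2 = g 2 then (1:ℂ) else 0) * (if f 3 = g 3 then (1:ℂ) else 0)) +
      ((if f 0 = g 0 then (1:ℂ) else 0) * (if f 1 = g 1 then (1:ℂ) else 0)) *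
        ((gx : ℂ) * (PauliX (f 2) (g 2) * PauliX (f 3) (g 3)) +
         (gz : ℂ) * (PauliZ (f 2) (g 2) * PauliZ (f 3) (g 3))) := by
  simp [Hpen4, Matrix.add_apply, Matrix.smul_apply, pauli_mul_01, pauli_mul_23,
    smul_eq_mul]
  split_ifs <;> ring

lemma delta_sum (x y : Fin 2) (w : Fin 2 × Fin 2 → ℂ) :
    ∑ r : Fin 2 × Fin 2,
      ((if x = r.1 then (1:ℂ) else 0) * (if y = r.2 then (1:ℂ) else 0)) * w r = w (x, y) := by
  fin_cases x <;> fin_cases y <;> simp [Fintype.sum_prod_type, Fin.sum_univ_two]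

lemma eigen (gx gz : ℝ) (i : I4) :
    (Hpen4 gx gz).mulVec (ev i) = ((Dr gx gz i : ℝ) : ℂ) • ev i := by
  funext f
  have h0 : (Hpen4 gx gz).mulVec (ev i) f = ∑ g, Hpen4 gx gz f g * ev i g := by
    simp [Matrix.mulVec, dotProduct]
  rw [h0, sum_pi4']
  have hev : ∀ q r : Fin 2 × Fin 2, ev i ![q.1, q.2, r.1, r.2] =
      bell (sgn i.1.1) (sgn i.1.2) q * bell (sgn i.2.1) (sgn i.2.2) r := by
    intro q r; simp [ev]
  set u := bell (sgn i.1.1) (sgn i.1.2) with hu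
  set w := bell (sgn i.2.1) (sgn i.2.2) with hw
  have key : ∑ q : Fin 2 × Fin 2, ∑ r : Fin 2 × Fin 2,
      Hpen4 gx gz f ![q.1, q.2, r.1, r.2] * ev i ![q.1, q.2, r.1, r.2] =
      (∑ q : Fin 2 × Fin 2,
        ((gx : ℂ) * (PauliX (f 0) q.1 * PauliX (f 1) q.2) +
         (gz : ℂ) * (PauliZ (f 0) q.1 * PauliZ (f 1) q.2)) * u q) *
      (∑ r : Fin 2 × Fin 2,
        ((if f 2 = r.1 then (1:ℂ) else 0) * (if f 3 = r.2 then (1:ℂ) else 0)) * w r) +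
      (∑ q : Fin 2 × Fin 2,
        ((if f 0 = q.1 then (1:ℂ) else 0) * (if f 1 = q.2 then (1:ℂ) else 0)) * u q) *
      (∑ r : Fin 2 × Fin 2,
        ((gx : ℂ) * (PauliX (f 2) r.1 * PauliX (f 3) r.2) +
         (gz : ℂ) * (PauliZ (f 2) r.1 * PauliZ (f 3) r.2)) * w r) := by
    rw [Finset.sum_mul_sum, Finset.sum_mul_sum, ← Finset.sum_add_distrib]
    refine Finset.sum_congr rfl fun q _ => ?_
    rw [← Finset.sum_add_distrib]
    refine Finset.sum_congr rfl fun r _ => ?_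
    rw [Hpen4_apply, hev]
    simp only [Matrix.cons_val_zero, Matrix.cons_val_one, Matrix.head_cons,
      Matrix.cons_val_two, Matrix.tail_cons, Matrix.cons_val_three]
    by_cases h1 : f 0 = q.1 <;> by_cases h2 : f 1 = q.2 <;> by_cases h3 : f 2 = r.1 <;>
      by_cases h4 : f 3 = r.2 <;> simp only [h1, h2, h3, h4, if_true, if_false] <;> ring
  rw [key]
  rw [eig2 gx gz i.1.1 i.1.2 (f 0, f 1), eig2 gx gz i.2.1 i.2.2 (f 2, f 3),
    delta_sum, delta_sum]
  show _ = ((Dr gx gz i : ℝ) : ℂ) * (u (f 0, f 1) * w (f 2, f 3))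
  simp only [Dr]
  push_cast
  ring

lemma WWt : W * Wᵀ = 1 := by
  ext i j
  rw [mul_apply]
  have h0 : ∀ f, W i f * Wᵀ f j = ev i f * ev j f := fun f => rfl
  simp only [h0]
  rw [sum_pi4']
  have key : ∑ q : Fin 2 × Fin 2, ∑ r : Fin 2 × Fin 2,
      ev i ![q.1, q.2, r.1, r.2] * ev j ![q.1, q.2, r.1, r.2] =
      (∑ q : Fin 2 × Fin 2, bell (sgn i.1.1) (sgn i.1.2) q * bell (sgn j.1.1) (sgn j.1.2) q) *
      (∑ r : Fin 2 × Fin 2, bell (sgn i.2.1) (sgn i.2.2) r * bell (sgn j.2.1) (sgn j.2.2) r) := by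
    rw [Finset.sum_mul_sum]
    refine Finset.sum_congr rfl fun q _ => Finset.sum_congr rfl fun r _ => ?_
    simp only [ev]
    simp only [Matrix.cons_val_zero, Matrix.cons_val_one, Matrix.head_cons,
      Matrix.cons_val_two, Matrix.tail_cons, Matrix.cons_val_three]
    ring
  rw [key, bell_ortho, bell_ortho, Matrix.one_apply]
  obtain ⟨⟨a, b⟩, c, d⟩ := i
  obtain ⟨⟨a', b'⟩, c', d'⟩ := j
  simp only [Prod.mk.injEq]
  split_ifs <;> simp_all

lemma WtW : Wᵀ * W = 1 := (Matrix.mul_eq_one_comm_of_equiv e4.symm).mp WWt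

lemma sgn_succ (a : Fin 2) : sgn (a + 1) = -sgn a := by fin_cases a <;> rfl

lemma ev_eq_cw (a b : Fin 2) : ev ((a, b), (a + 1, b + 1)) = cw (sgn a) (sgn b) := by
  funext f
  simp only [ev, cw, sgn_succ]

lemma Dr_zero (gx gz : ℝ) (a b : Fin 2) : Dr gx gz ((a, b), (a + 1, b + 1)) = 0 := by
  fin_cases a <;> fin_cases b <;> simp [Dr, sgn]

lemma Dr_ne (gx gz : ℝ) (hgx : gx ≠ 0) (hgz : gz ≠ 0) (hne : |gx| ≠ |gz|) (i : I4)
    (h : ¬(i.2.1 = i.1.1 + 1 ∧ i.2.2 = i.1.2 + 1)) : Dr gx gz i ≠ 0 := by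
  obtain ⟨⟨a, b⟩, c, d⟩ := i
  fin_cases a <;> fin_cases b <;> fin_cases c <;> fin_cases d <;>
    simp_all [Dr, sgn] <;>
    intro hcon <;> apply hne <;>
    first
      | (have hxz : gx = gz := by linarith
         rw [hxz])
      | (have hxz : gx = -gz := by linarith
         rw [hxz, abs_neg])

lemma HWt (gx gz : ℝ) :
    Hpen4 gx gz * Wᵀ = Wᵀ * Matrix.diagonal (fun i => ((Dr gx gz i : ℝ) : ℂ)) := by
  ext f i
  have h1 : (Hpen4 gx gz * Wᵀ) f i = (Hpen4 gx gz).mulVec (ev i) f := by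
    simp [Matrix.mul_apply, Matrix.mulVec, dotProduct, W, Matrix.transpose_apply]
  rw [h1, eigen]
  simp [Matrix.mul_apply, Matrix.diagonal_apply, W, Matrix.transpose_apply,
    Finset.sum_ite_eq, mul_comm]

lemma Hfact (gx gz : ℝ) :
    Hpen4 gx gz = Wᵀ * Matrix.diagonal (fun i => ((Dr gx gz i : ℝ) : ℂ)) * W := by
  calc Hpen4 gx gz = Hpen4 gx gz * (Wᵀ * W) := by rw [WtW, Matrix.mul_one]
  _ = (Hpen4 gx gz * Wᵀ) * W := by rw [Matrix.mul_assoc]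
  _ = _ := by rw [HWt]

lemma sgn_cases (x : Fin 2) : sgn x = 1 ∨ sgn x = -1 := by fin_cases x <;> simp [sgn]

lemma Wt_inj : Function.Injective (Wᵀ.mulVec) := by
  intro x y hxy
  have h : W.mulVec (Wᵀ.mulVec x) = W.mulVec (Wᵀ.mulVec y) := by rw [hxy]
  simpa [Matrix.mulVec_mulVec, WWt, Matrix.one_mulVec] using h

lemma W_rows_li : LinearIndependent ℂ (fun i : I4 => W i) := by
  rw [Fintype.linearIndependent_iff]
  intro co hco
  have hvm : Matrix.vecMul co W = 0 := by
    funext f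
    have := congrFun hco f
    simpa [Matrix.vecMul, dotProduct, Finset.sum_apply, W] using this
  have hkey : co = Matrix.vecMul (Matrix.vecMul co W) Wᵀ := by
    rw [Matrix.vecMul_vecMul, WWt, Matrix.vecMul_one]
  intro i
  rw [hkey, hvm, Matrix.zero_vecMul]
  rfl

end HPaux

open HPaux in
theorem hpen4_kernel (gx gz : ℝ) (hgx : gx ≠ 0) (hgz : gz ≠ 0) (hne : |gx| ≠ |gz|) :
    LinearMap.ker (Hpen4 gx gz).mulVecLin = Submodule.span ℂ codewords ∧
    Module.finrank ℂ (LinearMap.ker (Hpen4 gx gz).mulVecLin) = 4 := by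
  classical
  have hcw_ev : ∀ v ∈ codewords, ∃ a b : Fin 2, v = ev ((a, b), (a + 1, b + 1)) := by
    rintro v ⟨s, t, hs, ht, rfl⟩
    rcases hs with rfl | rfl <;> rcases ht with rfl | rfl
    · exact ⟨0, 0, by rw [ev_eq_cw]; norm_num [sgn]⟩
    · exact ⟨0, 1, by rw [ev_eq_cw]; norm_num [sgn]⟩
    · exact ⟨1, 0, by rw [ev_eq_cw]; norm_num [sgn]⟩
    · exact ⟨1, 1, by rw [ev_eq_cw]; norm_num [sgn]⟩
  have hspan_le : Submodule.span ℂ codewords ≤ LinearMap.ker (Hpen4 gx gz).mulVecLin := by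
    rw [Submodule.span_le]
    intro v hv
    obtain ⟨a, b, rfl⟩ := hcw_ev v hv
    simp only [SetLike.mem_coe, LinearMap.mem_ker, Matrix.mulVecLin_apply]
    rw [eigen, Dr_zero]
    simp
  have hker_le : LinearMap.ker (Hpen4 gx gz).mulVecLin ≤ Submodule.span ℂ codewords := by
    intro v hv
    rw [LinearMap.mem_ker, Matrix.mulVecLin_apply] at hv
    have h2 : Wᵀ.mulVec ((Matrix.diagonal (fun i => ((Dr gx gz i : ℝ) : ℂ))).mulVec
        (W.mulVec v)) = 0 := by
      rw [Matrix.mulVec_mulVec, Matrix.mulVec_mulVec, ← Hfact gx gz, hv]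
    have h3 : (Matrix.diagonal (fun i => ((Dr gx gz i : ℝ) : ℂ))).mulVec (W.mulVec v) = 0 := by
      apply Wt_inj
      rw [h2, Matrix.mulVec_zero]
    have hDc : ∀ i, ((Dr gx gz i : ℝ) : ℂ) * (W.mulVec v) i = 0 := by
      intro i
      have := congrFun h3 i
      simpa [Matrix.mulVec, dotProduct, Matrix.diagonal_apply, Finset.sum_ite_eq] using this
    have hdecomp : v = ∑ i : I4, (W.mulVec v) i • ev i := by
      have hv2 : v = Wᵀ.mulVec (W.mulVec v) := by
        rw [Matrix.mulVec_mulVec, WtW, Matrix.one_mulVec]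
      nth_rewrite 1 [hv2]
      funext f
      rw [Finset.sum_apply]
      simp [Matrix.mulVec, dotProduct, W, Matrix.transpose_apply, mul_comm]
    rw [hdecomp]
    refine Submodule.sum_mem _ fun i _ => ?_
    by_cases hi : i.2.1 = i.1.1 + 1 ∧ i.2.2 = i.1.2 + 1
    · refine Submodule.smul_mem _ _ (Submodule.subset_span ?_)
      obtain ⟨⟨a, b⟩, cc, dd⟩ := i
      obtain ⟨h1', h2'⟩ := hi
      simp only at h1' h2'
      subst h1' h2'
      exact ⟨sgn a, sgn b, sgn_cases a, sgn_cases b, ev_eq_cw a b⟩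
    · have h0 : (W.mulVec v) i = 0 := by
        have hD := Dr_ne gx gz hgx hgz hne i hi
        rcases mul_eq_zero.mp (hDc i) with h | h
        · exact absurd (Complex.ofReal_eq_zero.mp h) hD
        · exact h
      rw [h0, zero_smul]
      exact Submodule.zero_mem _
  have heq : LinearMap.ker (Hpen4 gx gz).mulVecLin = Submodule.span ℂ codewords :=
    le_antisymm hker_le hspan_le
  refine ⟨heq, ?_⟩
  rw [heq]
  have hrange : Set.range (fun p : Fin 2 × Fin 2 => ev ((p.1, p.2), (p.1 + 1, p.2 + 1)))
      = codewords := by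
    ext v
    constructor
    · rintro ⟨p, rfl⟩
      exact ⟨sgn p.1, sgn p.2, sgn_cases p.1, sgn_cases p.2, ev_eq_cw p.1 p.2⟩
    · intro hv
      obtain ⟨a, b, rfl⟩ := hcw_ev v hv
      exact ⟨(a, b), rfl⟩
  have hinj : Function.Injective
      (fun p : Fin 2 × Fin 2 => (((p.1, p.2), (p.1 + 1, p.2 + 1)) : I4)) := by decide
  have hli : LinearIndependent ℂ
      (fun p : Fin 2 × Fin 2 => ev ((p.1, p.2), (p.1 + 1, p.2 + 1))) :=
    W_rows_li.comp _ hinj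
  rw [← hrange, finrank_span_eq_card hli]
  simp

end
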